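/- arXiv:1310.3809 — 3 statements merged into one kernel-verified Lean document; each statement's English description precedes it below -/
import Mathlib

section
/- Let α ∈ (1, 2] and ρ ∈ (1/2, 1]. Define C_ρ = ρ^α / (1 − 2(1−ρ)^α). Then the function ρ ↦ C_ρ on the interval where 2(1−ρ)^α < 1 attains its minimum at ρ̂ = 1 − 2^(−1/(α−1)). -/
open Real Set

/-- Tangent line inequality for the convex function `x ↦ x ^ α`. -/
lemma rpow_tangent_line (α : ℝ) (hα : 1 ≤ α) {x y : ℝ} (hx : 0 ≤ x) (hy : 0 < y) :
    y ^ α + α * y ^ (α - 1) * (x - y) ≤ x ^ α := by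
  have hs : (-1 : ℝ) ≤ x / y - 1 := by
    have : 0 ≤ x / y := div_nonneg hx hy.le
    linarith
  have hb := one_add_mul_self_le_rpow_one_add hs hα
  have h1 : 1 + (x / y - 1) = x / y := by ring
  rw [h1, Real.div_rpow hx hy.le] at hb
  have hyα : (0:ℝ) < y ^ α := Real.rpow_pos_of_pos hy α
  have hy1 : y ^ (α - 1) = y ^ α / y := by
    rw [Real.rpow_sub hy, Real.rpow_one]
  rw [hy1]
  have h2 := mul_le_mul_of_nonneg_left hb hyα.le
  have hy0 : y ≠ 0 := hy.ne'
  calc y ^ α + α * (y ^ α / y) * (x - y)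
      = y ^ α * (1 + α * (x / y - 1)) := by field_simp
    _ ≤ y ^ α * (x ^ α / y ^ α) := h2
    _ = x ^ α := by field_simp

/-- Mulders' optimal parameter: for `α ∈ (1, 2]` and `C ρ = ρ^α / (1 - 2(1-ρ)^α)`,
the function `ρ ↦ C ρ`, on the part of the interval `(1/2, 1]` where
`2 * (1 - ρ)^α < 1`, attains its minimum at `ρ̂ = 1 - 2^(-1/(α-1))`. -/
theorem mulders_optimal_rho (α : ℝ) (hα : α ∈ Set.Ioc (1 : ℝ) 2) :
    IsMinOn (fun ρ : ℝ => ρ ^ α / (1 - 2 * (1 - ρ) ^ α))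
      {ρ : ℝ | ρ ∈ Set.Ioc (1 / 2 : ℝ) 1 ∧ 2 * (1 - ρ) ^ α < 1}
      (1 - 2 ^ (-1 / (α - 1))) := by
  obtain ⟨hα1, hα2⟩ := hα
  set β : ℝ := α - 1 with hβdef
  have hβ0 : 0 < β := by rw [hβdef]; linarith
  have hβ1 : β ≤ 1 := by rw [hβdef]; linarith
  have hαβ : α = β + 1 := by rw [hβdef]; ring
  set c : ℝ := (2 : ℝ) ^ (-1 / β) with hcdef
  have hc0 : 0 < c := Real.rpow_pos_of_pos two_pos _
  have hcβ : c ^ β = 1 / 2 := by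
    rw [hcdef, ← Real.rpow_mul (by norm_num : (0:ℝ) ≤ 2)]
    have h : -1 / β * β = -1 := by field_simp
    rw [h, Real.rpow_neg_one]
    norm_num
  have hcα : c ^ α = c / 2 := by
    rw [hαβ, Real.rpow_add_one hc0.ne', hcβ]; ring
  have hchalf : c ≤ 1 / 2 := by
    have hexp : -1 / β ≤ -1 := by
      rw [neg_div]
      have := one_le_one_div hβ0 hβ1
      linarith
    have h := Real.rpow_le_rpow_of_exponent_le (by norm_num : (1:ℝ) ≤ 2) hexp
    rw [Real.rpow_neg_one] at h
    rw [hcdef]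
    calc (2:ℝ) ^ (-1/β) ≤ (2:ℝ)⁻¹ := h
      _ = 1/2 := by norm_num
  have h1c : (0:ℝ) < 1 - c := by linarith
  have h1cα : (1 - c) ^ α = (1 - c) ^ β * (1 - c) := by
    rw [hαβ, Real.rpow_add_one h1c.ne']
  have h1cβ : (0:ℝ) < (1 - c) ^ β := Real.rpow_pos_of_pos h1c _
  clear_value β c
  clear hβdef hcdef
  intro ρ hρ
  obtain ⟨⟨hρ1, hρ2⟩, hρ3⟩ := hρ
  set t : ℝ := 1 - ρ with htdef
  have ht0 : 0 ≤ t := by rw [htdef]; linarith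
  have hρt : ρ = 1 - t := by rw [htdef]; ring
  clear_value t
  have hden2 : (0:ℝ) < 1 - 2 * t ^ α := by linarith
  have hsimp : 1 - (1 - c) = c := by ring
  have hden1 : 1 - 2 * (1 - (1 - c)) ^ α = 1 - c := by rw [hsimp, hcα]; ring
  show (1 - c) ^ α / (1 - 2 * (1 - (1 - c)) ^ α) ≤ ρ ^ α / (1 - 2 * (1 - ρ) ^ α)
  rw [hden1, ← htdef, hρt]
  rw [div_le_div_iff₀ h1c hden2]
  have hA := rpow_tangent_line α hα1.le (by linarith : (0:ℝ) ≤ 1 - t) h1c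
  have hB := rpow_tangent_line α hα1.le ht0 hc0
  have e1 : (1 - c) ^ (α - 1) = (1 - c) ^ β := by congr 1; rw [hαβ]; ring
  have e2 : c ^ (α - 1) = c ^ β := by congr 1; rw [hαβ]; ring
  rw [e1] at hA
  rw [e2, hcβ, hcα] at hB
  have key : (1 - c) ^ β * (1 - 2 * t ^ α) ≤ (1 - t) ^ α := by
    have step1 : 1 - 2 * t ^ α ≤ 1 - c - α * (t - c) := by linarith
    have step2 : (1 - c) ^ β * (1 - 2 * t ^ α) ≤ (1 - c) ^ β * (1 - c - α * (t - c)) :=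
      mul_le_mul_of_nonneg_left step1 h1cβ.le
    have step3 : (1 - c) ^ β * (1 - c - α * (t - c))
        = (1 - c) ^ α + α * (1 - c) ^ β * (1 - t - (1 - c)) := by
      rw [h1cα]; ring
    linarith
  have final := mul_le_mul_of_nonneg_right key h1c.le
  rw [h1cα]
  nlinarith [final]
end

section
/- Let α ∈ (1, 2], ρ ∈ (1/2, 1) with 2(1−ρ)^α < 1, and c > 0. If S : ℕ → ℝ satisfies S(n) ≤ c·(ρn)^α + 2·S(⌈(1−ρ)n⌉) for all n ≥ n₀ and S is bounded on [0, n₀], then there exists a constant C with S(n) ≤ C·n^α for all n; moreover one can take C arbitrarily close to c·ρ^α/(1 − 2(1−ρ)^α) for large n. -/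
open Real

set_option maxHeartbeats 1000000 in
lemma aux_key (α ρ c : ℝ) (hα : α ∈ Set.Ioc (1 : ℝ) 2) (hρ : ρ ∈ Set.Ioo (1 / 2 : ℝ) 1)
    (hρα : 2 * (1 - ρ) ^ α < 1) (hc : 0 < c)
    (S : ℕ → ℝ) (n₀ : ℕ)
    (hrec : ∀ n : ℕ, n₀ ≤ n → S n ≤ c * (ρ * n) ^ α + 2 * S ⌈(1 - ρ) * n⌉₊)
    (ε : ℝ) (hε : 0 < ε) :
    ∃ E : ℝ, 0 ≤ E ∧ ∀ n : ℕ, 1 ≤ n →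
      S n ≤ (c * ρ ^ α / (1 - 2 * (1 - ρ) ^ α) + ε) * (n : ℝ) ^ α + E * n := by
  obtain ⟨hα1, hα2⟩ := hα
  obtain ⟨hρ1, hρ2⟩ := hρ
  have hρ0 : 0 < ρ := by linarith
  obtain ⟨a, ha_def⟩ : ∃ x : ℝ, x = 1 - ρ := ⟨_, rfl⟩
  have ha0 : 0 < a := by rw [ha_def]; linarith
  have ha1 : a < 1 / 2 := by rw [ha_def]; linarith
  have haα : 0 < a ^ α := rpow_pos_of_pos ha0 α
  have hs0 : 0 < 1 - 2 * a ^ α := by rw [ha_def]; linarith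
  obtain ⟨K, hK_def⟩ : ∃ x : ℝ, x = c * ρ ^ α / (1 - 2 * a ^ α) := ⟨_, rfl⟩
  have hK : 0 < K := hK_def ▸ div_pos (mul_pos hc (rpow_pos_of_pos hρ0 α)) hs0
  have hKs : K * (1 - 2 * a ^ α) = c * ρ ^ α := by
    rw [hK_def]; exact div_mul_cancel₀ _ hs0.ne'
  obtain ⟨A, hA_def⟩ : ∃ x : ℝ, x = K + ε := ⟨_, rfl⟩
  have hA : 0 < A := by rw [hA_def]; positivity
  obtain ⟨δ, hδ_def⟩ : ∃ x : ℝ, x = min a (ε * (1 - 2 * a ^ α) * a / (6 * A * a ^ α)) :=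
    ⟨_, rfl⟩
  have hδ0 : 0 < δ := hδ_def ▸ lt_min ha0 (by positivity)
  have hδa : δ ≤ a := hδ_def ▸ min_le_left _ _
  have hδkey : 2 * A * (a ^ α * (3 * δ / a)) ≤ ε * (1 - 2 * a ^ α) := by
    have h1 : δ ≤ ε * (1 - 2 * a ^ α) * a / (6 * A * a ^ α) := hδ_def ▸ min_le_right _ _
    rw [le_div_iff₀ (by positivity)] at h1
    rw [show 2 * A * (a ^ α * (3 * δ / a)) = δ * (6 * A * a ^ α) / a by field_simp; ring,
      div_le_iff₀ ha0]
    linarith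
  obtain ⟨N, hN_def⟩ : ∃ x : ℕ, x = max (max n₀ 2) (max ⌈1 / δ⌉₊ ⌈2 / (2 * ρ - 1)⌉₊) :=
    ⟨_, rfl⟩
  obtain ⟨E, hE⟩ := Finset.exists_le ((Finset.range N).image fun n => |S n|)
  have hEbd : ∀ n < N, |S n| ≤ E := fun n hn =>
    hE _ (Finset.mem_image_of_mem _ (Finset.mem_range.mpr hn))
  refine ⟨max E 0, le_max_right _ _, ?_⟩
  intro n
  induction n using Nat.strong_induction_on with
  | _ n ih =>
    intro hn1
    have hn1R : (1 : ℝ) ≤ n := by exact_mod_cast hn1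
    have hnα : (0:ℝ) ≤ (n : ℝ) ^ α := rpow_nonneg (Nat.cast_nonneg n) α
    by_cases hnN : n < N
    · have h1 : S n ≤ E := (le_abs_self _).trans (hEbd n hnN)
      have h2 : max E 0 * 1 ≤ max E 0 * n := by
        apply mul_le_mul_of_nonneg_left hn1R (le_max_right _ _)
      have h3 : E ≤ max E 0 := le_max_left _ _
      have h4 : 0 < c * ρ ^ α / (1 - 2 * (1 - ρ) ^ α) + ε := by
        have : 0 < 1 - 2 * (1 - ρ) ^ α := ha_def ▸ hs0
        positivity
      nlinarith [mul_nonneg h4.le hnα]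
    · push_neg at hnN
      rw [hN_def] at hnN
      have hn₀ : n₀ ≤ n := le_trans (le_trans (le_max_left _ _) (le_max_left _ _)) hnN
      have hn2 : 2 ≤ n := le_trans (le_trans (le_max_right _ _) (le_max_left _ _)) hnN
      have hn2R : (2:ℝ) ≤ n := by exact_mod_cast hn2
      have hnδ : 1 / δ ≤ (n : ℝ) := by
        have := le_trans (le_trans (le_max_left _ _) (le_max_right _ _)) hnN
        exact le_trans (Nat.le_ceil _) (by exact_mod_cast this)
      have hnρ : 2 / (2 * ρ - 1) ≤ (n : ℝ) := by
        have := le_trans (le_trans (le_max_right _ _) (le_max_right _ _)) hnN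
        exact le_trans (Nat.le_ceil _) (by exact_mod_cast this)
      obtain ⟨m, hm_def⟩ : ∃ x : ℕ, x = ⌈(1 - ρ) * (n:ℝ)⌉₊ := ⟨_, rfl⟩
      have hmpos : 0 < (1 - ρ) * (n : ℝ) := mul_pos (by linarith) (by linarith)
      have hm1 : 1 ≤ m := hm_def ▸ Nat.one_le_ceil_iff.mpr hmpos
      have hmn : m < n := by
        have h1 : (1 - ρ) * (n:ℝ) ≤ ((n - 1 : ℕ) : ℝ) := by
          rw [Nat.cast_sub hn1]
          push_cast
          nlinarith
        have h2 := Nat.ceil_le.mpr h1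
        rw [← hm_def] at h2
        omega
      have hmR : (m : ℝ) ≤ (1 - ρ) * n + 1 := by
        rw [hm_def]; exact (Nat.ceil_lt_add_one hmpos.le).le
      have hδn : 1 ≤ δ * n := by
        rw [div_le_iff₀ hδ0] at hnδ
        linarith [hnδ]
      have hmR2 : (m : ℝ) ≤ (a + δ) * n := by
        have : (1 - ρ) * (n:ℝ) + 1 ≤ a * n + δ * n := by
          rw [ha_def] at *; linarith
        nlinarith
      -- bound m^α
      have hmα : (m : ℝ) ^ α ≤ (a + δ) ^ α * (n : ℝ) ^ α := by
        rw [← mul_rpow (by positivity) (Nat.cast_nonneg n)]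
        exact rpow_le_rpow (Nat.cast_nonneg m) hmR2 (by linarith)
      have haδ : (a + δ) ^ α ≤ a ^ α * (1 + 3 * δ / a) := by
        have hu0 : 0 ≤ δ / a := by positivity
        have hu1 : δ / a ≤ 1 := by rw [div_le_one ha0]; exact hδa
        have h1 : a + δ = a * (1 + δ / a) := by field_simp
        rw [h1, mul_rpow ha0.le (by linarith)]
        have h2 : (1 + δ / a) ^ α ≤ (1 + δ / a) ^ (2:ℝ) :=
          rpow_le_rpow_of_exponent_le (by linarith) hα2
        have h3 : (1 + δ / a) ^ (2:ℝ) = (1 + δ / a) ^ 2 := by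
          rw [rpow_two]
        have h4 : (1 + δ / a) ^ 2 ≤ 1 + 3 * (δ / a) := by nlinarith
        have : (1 + δ / a) ^ α ≤ 1 + 3 * (δ / a) := by
          rw [h3] at h2; linarith
        have := mul_le_mul_of_nonneg_left this haα.le
        calc a ^ α * (1 + δ / a) ^ α ≤ a ^ α * (1 + 3 * (δ / a)) := this
          _ = a ^ α * (1 + 3 * δ / a) := by ring
      have hmα2 : (m : ℝ) ^ α ≤ a ^ α * (1 + 3 * δ / a) * (n : ℝ) ^ α := by
        calc (m:ℝ) ^ α ≤ (a + δ) ^ α * (n:ℝ) ^ α := hmα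
          _ ≤ a ^ α * (1 + 3 * δ / a) * (n:ℝ) ^ α :=
            mul_le_mul_of_nonneg_right haδ hnα
      -- linear term
      have hE0 : (0:ℝ) ≤ max E 0 := le_max_right _ _
      have hlin : 2 * (max E 0) * (m:ℝ) ≤ max E 0 * n := by
        have h1 : 2 * ((1 - ρ) * n + 1) ≤ (n:ℝ) := by
          rw [div_le_iff₀ (by linarith : (0:ℝ) < 2 * ρ - 1)] at hnρ
          nlinarith
        nlinarith
      -- recursion
      have hR := hrec n hn₀
      rw [← hm_def] at hR
      have hmul : c * (ρ * (n:ℝ)) ^ α = c * ρ ^ α * (n:ℝ) ^ α := by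
        rw [mul_rpow hρ0.le (Nat.cast_nonneg n)]; ring
      have hIH : S m ≤ A * (m:ℝ) ^ α + (max E 0) * m := by
        rw [hA_def, hK_def, ha_def]; exact ih m hmn hm1
      -- combine
      have key1 : 2 * A * ((m:ℝ) ^ α) ≤ 2 * A * (a ^ α * (1 + 3 * δ / a) * (n:ℝ) ^ α) :=
        mul_le_mul_of_nonneg_left hmα2 (by positivity)
      have key2 : (2 * A * (a ^ α * (3 * δ / a))) * (n:ℝ) ^ α
          ≤ (ε * (1 - 2 * a ^ α)) * (n:ℝ) ^ α :=
        mul_le_mul_of_nonneg_right hδkey hnα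
      have hAexp : A * (n:ℝ)^α =
          c * ρ ^ α * (n:ℝ)^α + 2 * A * (a ^ α * (n:ℝ)^α) + (ε * (1 - 2 * a ^ α)) * (n:ℝ)^α := by
        rw [hA_def]
        nlinarith [hKs, rpow_nonneg (Nat.cast_nonneg n) α]
      rw [show c * ρ ^ α / (1 - 2 * (1 - ρ) ^ α) + ε = A by rw [hA_def, hK_def, ha_def]]
      rw [hmul] at hR
      linarith only [hIH, hR, key1, key2, hlin, hAexp, hA_def]


/-- Recurrence analysis of the short-product algorithm: if
`S n ≤ c * (ρ * n)^α + 2 * S ⌈(1 - ρ) * n⌉` for all `n ≥ n₀` and `S` is bounded on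
`[0, n₀]`, then `S n ≤ C * n^α` for some constant `C` and all `n ≥ 1`; moreover, for
every `ε > 0` one eventually has `S n ≤ (c * ρ^α / (1 - 2 * (1-ρ)^α) + ε) * n^α`. -/
theorem short_product_recurrence
    (α ρ c : ℝ) (hα : α ∈ Set.Ioc (1 : ℝ) 2) (hρ : ρ ∈ Set.Ioo (1 / 2 : ℝ) 1)
    (hρα : 2 * (1 - ρ) ^ α < 1) (hc : 0 < c)
    (S : ℕ → ℝ) (n₀ : ℕ)
    (hrec : ∀ n : ℕ, n₀ ≤ n → S n ≤ c * (ρ * n) ^ α + 2 * S ⌈(1 - ρ) * n⌉₊)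
    (hbdd : ∃ B : ℝ, ∀ n : ℕ, n ≤ n₀ → |S n| ≤ B) :
    (∃ C : ℝ, ∀ n : ℕ, 1 ≤ n → S n ≤ C * (n : ℝ) ^ α) ∧
    (∀ ε : ℝ, 0 < ε → ∃ N : ℕ, ∀ n : ℕ, N ≤ n →
      S n ≤ (c * ρ ^ α / (1 - 2 * (1 - ρ) ^ α) + ε) * (n : ℝ) ^ α) := by
  have hα1 := hα.1
  constructor
  · obtain ⟨E, hE0, hE⟩ := aux_key α ρ c hα hρ hρα hc S n₀ hrec 1 one_pos
    refine ⟨c * ρ ^ α / (1 - 2 * (1 - ρ) ^ α) + 1 + E, fun n hn => ?_⟩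
    have hn1R : (1:ℝ) ≤ n := by exact_mod_cast hn
    have h1 : (n:ℝ) = (n:ℝ) ^ (1:ℝ) := (rpow_one _).symm
    have h2 : (n:ℝ) ^ (1:ℝ) ≤ (n:ℝ) ^ α := rpow_le_rpow_of_exponent_le hn1R hα1.le
    have h3 : E * n ≤ E * (n:ℝ) ^ α :=
      mul_le_mul_of_nonneg_left (le_trans (le_of_eq h1) h2) hE0
    have := hE n hn
    nlinarith
  · intro ε hε
    obtain ⟨E, hE0, hE⟩ := aux_key α ρ c hα hρ hρα hc S n₀ hrec (ε/2) (by linarith)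
    obtain ⟨T, hT_def⟩ : ∃ x : ℝ, x = (2 * E / ε) ^ (1 / (α - 1)) := ⟨_, rfl⟩
    refine ⟨⌈T⌉₊ + 1, fun n hn => ?_⟩
    have hn1 : 1 ≤ n := le_trans (Nat.le_add_left _ _) hn
    have hn1R : (1:ℝ) ≤ n := by exact_mod_cast hn1
    have hnT : T ≤ (n:ℝ) := by
      have : (⌈T⌉₊ : ℝ) ≤ n := by exact_mod_cast le_trans (Nat.le_succ _) hn
      exact le_trans (Nat.le_ceil _) this
    have hα1' : (0:ℝ) < α - 1 := by linarith
    have hpow : 2 * E / ε ≤ (n:ℝ) ^ (α - 1) := by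
      have h1 : T ^ (α - 1) ≤ (n:ℝ) ^ (α - 1) :=
        rpow_le_rpow (hT_def ▸ rpow_nonneg (by positivity) _) hnT hα1'.le
      have h2 : T ^ (α - 1) = 2 * E / ε := by
        rw [hT_def, one_div, Real.rpow_inv_rpow (by positivity) hα1'.ne']
      linarith [h1, h2 ▸ h1]
    have hlin : E * (n:ℝ) ≤ (ε / 2) * (n:ℝ) ^ α := by
      have h1 : E ≤ (ε/2) * (n:ℝ) ^ (α - 1) := by
        rw [div_le_iff₀ hε] at hpow
        nlinarith
      have hnpos : (0:ℝ) < n := by linarith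
      have h2 : (n:ℝ) ^ (α - 1) * (n:ℝ) = (n:ℝ) ^ α := by
        rw [← Real.rpow_add_one hnpos.ne' (α - 1), sub_add_cancel]
      nlinarith [mul_le_mul_of_nonneg_right h1 hnpos.le]
    have := hE n hn1
    nlinarith [this, hlin]
end

section
/- Let m be odd, R = 2^(2⌈n/2⌉), and m' satisfy m·m' ≡ −1 (mod R). Given input a with 0 ≤ a < m², set b = a·m' mod R. Write m = m₁·2^⌈n/2⌉ + m₀ and b = b₁·2^⌈n/2⌉ + b₀ with 0 ≤ m₀, b₀ < 2^⌈n/2⌉. Then m₀·b₀ ≡ −(a + (m₁b₀ + m₀b₁)·2^⌈n/2⌉) (mod R). -/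
/-- Key identity for Montgomery reduction in `1.25 M(n)` (Theorem 3): with `m` odd,
`H = ⌈n/2⌉`, `R = 2 ^ (2 * H)`, `m * m' ≡ -1 (mod R)`, `0 ≤ a < m ^ 2`,
`b = a * m' mod R`, and splits `m = m₁ * 2^H + m₀`, `b = b₁ * 2^H + b₀` with
`0 ≤ m₀, b₀ < 2^H`, the low sub-product satisfies
`m₀ * b₀ ≡ -(a + (m₁ * b₀ + m₀ * b₁) * 2^H) (mod R)`. -/
theorem montgomery_low_subproduct
    (n : ℕ) (m m' a b m₁ m₀ b₁ b₀ : ℤ)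
    (H : ℕ) (hH : H = (n + 1) / 2)
    (hm_odd : Odd m) (hm_pos : 0 < m)
    (hmm' : m * m' ≡ -1 [ZMOD ((2 : ℤ) ^ (2 * H))])
    (ha0 : 0 ≤ a) (ha : a < m ^ 2)
    (hb : b = a * m' % ((2 : ℤ) ^ (2 * H)))
    (hm_split : m = m₁ * 2 ^ H + m₀) (hm₀0 : 0 ≤ m₀) (hm₀ : m₀ < 2 ^ H)
    (hb_split : b = b₁ * 2 ^ H + b₀) (hb₀0 : 0 ≤ b₀) (hb₀ : b₀ < 2 ^ H) :
    m₀ * b₀ ≡ -(a + (m₁ * b₀ + m₀ * b₁) * 2 ^ H) [ZMOD ((2 : ℤ) ^ (2 * H))] := by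

  set R : ℤ := (2 : ℤ) ^ (2 * H) with hR
  have hbmod : b ≡ a * m' [ZMOD R] := by
    simp [Int.ModEq, hb, Int.emod_emod_of_dvd]
  have hmb : m * b ≡ -a [ZMOD R] := by
    calc m * b ≡ m * (a * m') [ZMOD R] := hbmod.mul_left m
      _ = a * (m * m') := by ring
      _ ≡ a * (-1) [ZMOD R] := hmm'.mul_left a
      _ = -a := by ring
  have hkey : m₀ * b₀ = m * b - m₁ * b₁ * R - (m₁ * b₀ + m₀ * b₁) * 2 ^ H := by
    rw [hm_split, hb_split, hR, two_mul, pow_add]; ring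
  have hz : m₁ * b₁ * R ≡ 0 [ZMOD R] := Int.modEq_zero_iff_dvd.mpr ⟨m₁ * b₁, by ring⟩
  calc m₀ * b₀ = m * b - m₁ * b₁ * R - (m₁ * b₀ + m₀ * b₁) * 2 ^ H := hkey
    _ ≡ -a - 0 - (m₁ * b₀ + m₀ * b₁) * 2 ^ H [ZMOD R] := (hmb.sub hz).sub (Int.ModEq.refl _)
    _ = -(a + (m₁ * b₀ + m₀ * b₁) * 2 ^ H) := by ring
end
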